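/- Removal of the □ operator preserves satisfiability (one step of the SNF translation): let R_1, …, R_m be PLTL formulae, x a proposition symbol, A a PLTL formula, and σ a model with (σ,0) ⊨ (⋀_{h=1}^{m} □R_h) ∧ □(x ⇒ □A). Let y be a proposition symbol occurring in none of the R_h, in x, or in A. Then there is a model σ′ that agrees with σ on all proposition symbols other than y and satisfies (σ′,0) ⊨ (⋀_{h=1}^{m} □R_h) ∧ □(x ⇒ A) ∧ □(x ⇒ y) ∧ □(y ⇒ ◯A) ∧ □(y ⇒ ◯y). -/
import Mathlib


/-- Syntax of Propositional Linear Temporal Logic over proposition symbols `P`. -/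
inductive PLTL (P : Type) : Type
  | tru : PLTL P
  | fls : PLTL P
  | start : PLTL P
  | atom : P → PLTL P
  | neg : PLTL P → PLTL P
  | conj : PLTL P → PLTL P → PLTL P
  | disj : PLTL P → PLTL P → PLTL P
  | impl : PLTL P → PLTL P → PLTL P
  | next : PLTL P → PLTL P
  | evtl : PLTL P → PLTL P
  | alw : PLTL P → PLTL P
  | untl : PLTL P → PLTL P → PLTL P
  | unls : PLTL P → PLTL P → PLTL P

namespace PLTL

/-- Satisfaction `(σ, i) ⊨ A` of a PLTL formula in a model `σ : ℕ → Set P` at index `i`. -/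
def Sat {P : Type} (σ : ℕ → Set P) : PLTL P → ℕ → Prop
  | tru, _ => True
  | fls, _ => False
  | start, i => i = 0
  | atom p, i => p ∈ σ i
  | neg A, i => ¬ Sat σ A i
  | conj A B, i => Sat σ A i ∧ Sat σ B i
  | disj A B, i => Sat σ A i ∨ Sat σ B i
  | impl A B, i => Sat σ A i → Sat σ B i
  | next A, i => Sat σ A (i + 1)
  | evtl A, i => ∃ k, i ≤ k ∧ Sat σ A k
  | alw A, i => ∀ j, i ≤ j → Sat σ A j
  | untl A B, i => ∃ k, i ≤ k ∧ Sat σ B k ∧ ∀ j, i ≤ j → j < k → Sat σ A j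
  | unls A B, i =>
      (∃ k, i ≤ k ∧ Sat σ B k ∧ ∀ j, i ≤ j → j < k → Sat σ A j) ∨ (∀ j, i ≤ j → Sat σ A j)

/-- A formula is valid iff it is satisfied at index 0 of every model. -/
def Valid {P : Type} (A : PLTL P) : Prop := ∀ σ : ℕ → Set P, Sat σ A 0

/-- A formula with no temporal connectives is propositionally valid iff
it is satisfied at every index of every model. -/
def PropValid {P : Type} (A : PLTL P) : Prop := ∀ (σ : ℕ → Set P) (i : ℕ), Sat σ A i

/-- A literal is a proposition symbol or a negated proposition symbol. -/
def IsLiteral {P : Type} : PLTL P → Prop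
  | atom _ => True
  | neg (atom _) => True
  | _ => False

/-- A conjunction of literals. -/
def IsConjLits {P : Type} : PLTL P → Prop
  | atom _ => True
  | neg (atom _) => True
  | conj A B => IsConjLits A ∧ IsConjLits B
  | _ => False

/-- Biconditional `A ⇔ B` as an abbreviation. -/
def piff {P : Type} (A B : PLTL P) : PLTL P := conj (impl A B) (impl B A)

/-- Finite disjunction. -/
def bigOr {P : Type} (l : List (PLTL P)) : PLTL P := l.foldr disj fls

/-- Finite conjunction. -/
def bigAnd {P : Type} (l : List (PLTL P)) : PLTL P := l.foldr conj tru

/-- The proposition symbols occurring in a formula. -/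
def syms {P : Type} : PLTL P → Set P
  | tru => ∅
  | fls => ∅
  | start => ∅
  | atom p => {p}
  | neg A => syms A
  | conj A B => syms A ∪ syms B
  | disj A B => syms A ∪ syms B
  | impl A B => syms A ∪ syms B
  | next A => syms A
  | evtl A => syms A
  | alw A => syms A
  | untl A B => syms A ∪ syms B
  | unls A B => syms A ∪ syms B

end PLTL

theorem PLTL.sat_congr {P : Type} (σ σ' : ℕ → Set P) (B : PLTL P)
    (h : ∀ i p, p ∈ PLTL.syms B → (p ∈ σ i ↔ p ∈ σ' i)) :
    ∀ i, PLTL.Sat σ B i ↔ PLTL.Sat σ' B i := by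
  induction B with
  | tru => intro i; rfl
  | fls => intro i; rfl
  | start => intro i; rfl
  | atom p => intro i; exact h i p rfl
  | neg A ih =>
      intro i
      exact not_congr (ih h i)
  | conj A B ihA ihB =>
      intro i
      exact and_congr (ihA (fun i p hp => h i p (Or.inl hp)) i)
        (ihB (fun i p hp => h i p (Or.inr hp)) i)
  | disj A B ihA ihB =>
      intro i
      exact or_congr (ihA (fun i p hp => h i p (Or.inl hp)) i)
        (ihB (fun i p hp => h i p (Or.inr hp)) i)
  | impl A B ihA ihB =>
      intro i
      exact imp_congr (ihA (fun i p hp => h i p (Or.inl hp)) i)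
        (ihB (fun i p hp => h i p (Or.inr hp)) i)
  | next A ih => intro i; exact ih h (i + 1)
  | evtl A ih =>
      intro i
      exact exists_congr fun k => and_congr_right fun _ => ih h k
  | alw A ih =>
      intro i
      exact forall_congr' fun j => imp_congr Iff.rfl (ih h j)
  | untl A B ihA ihB =>
      intro i
      exact exists_congr fun k => and_congr_right fun _ =>
        and_congr (ihB (fun i p hp => h i p (Or.inr hp)) k)
          (forall_congr' fun j => imp_congr Iff.rfl (imp_congr Iff.rfl
            (ihA (fun i p hp => h i p (Or.inl hp)) j)))
  | unls A B ihA ihB =>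
      intro i
      exact or_congr
        (exists_congr fun k => and_congr_right fun _ =>
          and_congr (ihB (fun i p hp => h i p (Or.inr hp)) k)
            (forall_congr' fun j => imp_congr Iff.rfl (imp_congr Iff.rfl
              (ihA (fun i p hp => h i p (Or.inl hp)) j))))
        (forall_congr' fun j => imp_congr Iff.rfl
          (ihA (fun i p hp => h i p (Or.inl hp)) j))

open PLTL in
/-- removal of the □ operator preserves satisfiability
(one step of the SNF translation). -/
theorem stmt_18 {P : Type} [Countable P] (m : ℕ) (R : Fin m → PLTL P) (x : P)
    (A : PLTL P) (σ : ℕ → Set P) (y : P)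
    (hyR : ∀ h : Fin m, y ∉ syms (R h)) (hyx : y ≠ x) (hyA : y ∉ syms A)
    (hσ : (∀ h : Fin m, Sat σ (alw (R h)) 0) ∧
          Sat σ (alw (impl (atom x) (alw A))) 0) :
    ∃ σ' : ℕ → Set P,
      (∀ (i : ℕ) (p : P), p ≠ y → (p ∈ σ' i ↔ p ∈ σ i)) ∧
      (∀ h : Fin m, Sat σ' (alw (R h)) 0) ∧
      Sat σ' (alw (impl (atom x) A)) 0 ∧
      Sat σ' (alw (impl (atom x) (atom y))) 0 ∧
      Sat σ' (alw (impl (atom y) (next A))) 0 ∧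
      Sat σ' (alw (impl (atom y) (next (atom y)))) 0 := by
  classical
  obtain ⟨hR, hx⟩ := hσ
  set σ' : ℕ → Set P := fun i => {p | p ≠ y ∧ p ∈ σ i} ∪ {p | p = y ∧ ∃ j, j ≤ i ∧ x ∈ σ j} with hσ'
  have hmemy : ∀ i, y ∈ σ' i ↔ (∃ j, j ≤ i ∧ x ∈ σ j) := by
    intro i
    simp [hσ', Set.mem_union, Set.mem_setOf_eq]
  have hmem : ∀ i p, p ≠ y → (p ∈ σ' i ↔ p ∈ σ i) := by
    intro i p hp
    simp [hσ', Set.mem_union, Set.mem_setOf_eq, hp]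
  have hcong : ∀ (B : PLTL P), y ∉ syms B → ∀ i, Sat σ B i ↔ Sat σ' B i := by
    intro B hB i
    refine PLTL.sat_congr σ σ' B (fun j p hp => ?_) i
    have hpy : p ≠ y := fun h => hB (h ▸ hp)
    exact (hmem j p hpy).symm
  refine ⟨σ', hmem, ?_, ?_, ?_, ?_, ?_⟩
  · intro h j hj
    exact (hcong (R h) (hyR h) j).mp (hR h j hj)
  · intro j _ hxj
    have hxj' : x ∈ σ j := (hmem j x (Ne.symm hyx)).mp hxj
    have := hx j (Nat.zero_le j) hxj' j le_rfl
    exact (hcong A hyA j).mp this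
  · intro j _ hxj
    have hxj' : x ∈ σ j := (hmem j x (Ne.symm hyx)).mp hxj
    exact (hmemy j).mpr ⟨j, le_rfl, hxj'⟩
  · intro j _ hyj
    obtain ⟨k, hk, hxk⟩ := (hmemy j).mp hyj
    · have := hx k (Nat.zero_le k) hxk (j + 1) (by omega)
      exact (hcong A hyA (j + 1)).mp this
  · intro j _ hyj
    obtain ⟨k, hk, hxk⟩ := (hmemy j).mp hyj
    · exact (hmemy (j + 1)).mpr ⟨k, by omega, hxk⟩
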